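/- Fix T > 0 and g ∈ C²([0,1]). There exists a constant C, depending only on g, β, 𝗋, 𝗉, m₋, m₊, m̄ and T, such that for every N ≥ 2, every mass configuration with m₋ ≤ m_x ≤ m₊, and every t ∈ [0,T]: | 𝒫_N(g,t) − 𝒫_N(g,0) + ∫₀ᵗ ℛ_N(g',s) ds | ≤ C/N, where 𝒫_N(g,t) = (1/N) Σ_{x=1}^N g(x/N) p̄_x(Nt) and ℛ_N(f,s) = (1/N) Σ_{x=1}^{N−1} f(x/N) r̄_x(Ns). -/

import Mathlib

open Finset intervalIntegral

/-- The disordered harmonic chain dynamics on `{1,…,N}`: `r` has components `1 ≤ x ≤ N-1`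
(with the convention `r_0 = r_N = 0`) and `p` has components `1 ≤ x ≤ N`. -/
def IsChainSolution (N : ℕ) (m : ℕ → ℝ) (r p : ℝ → ℕ → ℝ) : Prop :=
  (∀ t : ℝ, r t 0 = 0) ∧ (∀ t : ℝ, r t N = 0) ∧
  (∀ (t : ℝ) (x : ℕ), 1 ≤ x → x ≤ N - 1 →
    HasDerivAt (fun s => r s x) (p t (x + 1) / m (x + 1) - p t x / m x) t) ∧
  (∀ (t : ℝ) (x : ℕ), 1 ≤ x → x ≤ N →
    HasDerivAt (fun s => p s x) (r t x - r t (x - 1)) t)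

lemma sumIcc1 (f : ℕ → ℝ) (N : ℕ) :
    ∑ x ∈ Finset.Icc 1 N, f x = ∑ x ∈ Finset.range N, f (x + 1) := by
  induction N with
  | zero => simp
  | succ n ih =>
    rw [Finset.sum_Icc_succ_top (by omega), ih, Finset.sum_range_succ]

lemma abelSum (M : ℕ) (a w : ℕ → ℝ) (hw0 : w 0 = 0) (hwN : w (M + 1) = 0) :
    ∑ x ∈ Finset.Icc 1 (M + 1), a x * (w x - w (x - 1))
      = - ∑ x ∈ Finset.Icc 1 M, (a (x + 1) - a x) * w x := by
  rw [sumIcc1, sumIcc1]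
  simp only [Nat.add_sub_cancel, mul_sub, sub_mul, Finset.sum_sub_distrib]
  rw [Finset.sum_range_succ (fun x => a (x+1) * w (x+1)),
      Finset.sum_range_succ' (fun x => a (x+1) * w x)]
  simp [hw0, hwN]

lemma taylorBd {g g' g'' : ℝ → ℝ} {M : ℝ} (hM0 : 0 ≤ M)
    (hg' : ∀ y ∈ Set.Icc (0:ℝ) 1, HasDerivWithinAt g (g' y) (Set.Icc 0 1) y)
    (hg'' : ∀ y ∈ Set.Icc (0:ℝ) 1, HasDerivWithinAt g' (g'' y) (Set.Icc 0 1) y)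
    (hM : ∀ y ∈ Set.Icc (0:ℝ) 1, |g'' y| ≤ M)
    {a b : ℝ} (ha : a ∈ Set.Icc (0:ℝ) 1) (hb : b ∈ Set.Icc (0:ℝ) 1) (hab : a ≤ b) :
    |g b - g a - g' a * (b - a)| ≤ M * (b - a) * (b - a) := by
  have hlip : ∀ y ∈ Set.Icc (0:ℝ) 1, ∀ z ∈ Set.Icc (0:ℝ) 1, |g' y - g' z| ≤ M * |y - z| :=
    fun y hy z hz =>
      Convex.norm_image_sub_le_of_norm_hasDerivWithin_le hg'' hM (convex_Icc _ _) hz hy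
  have hsub : Set.Icc a b ⊆ Set.Icc (0:ℝ) 1 := Set.Icc_subset_Icc ha.1 hb.2
  set h : ℝ → ℝ := fun y => g y - g' a * y with hh
  have hd : ∀ y ∈ Set.Icc a b, HasDerivWithinAt h (g' y - g' a) (Set.Icc a b) y := by
    intro y hy
    have h1 : HasDerivWithinAt g (g' y) (Set.Icc a b) y := (hg' y (hsub hy)).mono hsub
    have h2 : HasDerivWithinAt (fun y : ℝ => g' a * y) (g' a * 1) (Set.Icc a b) y :=
      (hasDerivWithinAt_id y _).const_mul (g' a)
    have h3 := h1.sub h2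
    rw [mul_one] at h3
    exact h3
  have hbd : ∀ y ∈ Set.Icc a b, ‖g' y - g' a‖ ≤ M * (b - a) := by
    intro y hy
    calc ‖g' y - g' a‖ ≤ M * |y - a| := hlip y (hsub hy) a ha
    _ ≤ M * (b - a) := by
        apply mul_le_mul_of_nonneg_left _ hM0
        rw [abs_of_nonneg (by linarith [hy.1])]
        linarith [hy.2]
  have := Convex.norm_image_sub_le_of_norm_hasDerivWithin_le hd hbd (convex_Icc a b)
    (Set.left_mem_Icc.2 hab) (Set.right_mem_Icc.2 hab)
  have hval : h b - h a = g b - g a - g' a * (b - a) := by simp [hh]; ring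
  rw [Real.norm_eq_abs, hval, Real.norm_eq_abs,
    abs_of_nonneg (by linarith : (0:ℝ) ≤ b - a)] at this
  exact this

lemma energyConst (M : ℕ) (m : ℕ → ℝ) (hm : ∀ x, 0 < m x)
    (r p : ℝ → ℕ → ℝ) (hc : IsChainSolution (M + 1) m r p) (t : ℝ) :
    ((∑ x ∈ Finset.Icc 1 (M + 1), p t x ^ 2 / (2 * m x))
        + ∑ x ∈ Finset.Icc 1 M, r t x ^ 2 / 2)
      = (∑ x ∈ Finset.Icc 1 (M + 1), p 0 x ^ 2 / (2 * m x))
        + ∑ x ∈ Finset.Icc 1 M, r 0 x ^ 2 / 2 := by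
  obtain ⟨hr0, hrN, hdr, hdp⟩ := hc
  set H : ℝ → ℝ := fun s => (∑ x ∈ Finset.Icc 1 (M + 1), p s x ^ 2 / (2 * m x))
      + ∑ x ∈ Finset.Icc 1 M, r s x ^ 2 / 2 with hH
  have hder : ∀ s : ℝ, HasDerivAt H 0 s := by
    intro s
    have h1 : HasDerivAt (fun u => ∑ x ∈ Finset.Icc 1 (M + 1), p u x ^ 2 / (2 * m x))
        (∑ x ∈ Finset.Icc 1 (M + 1),
          (2 * p s x ^ 1 * (r s x - r s (x - 1))) / (2 * m x)) s := by
      apply HasDerivAt.fun_sum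
      intro x hx
      obtain ⟨hx1, hx2⟩ := Finset.mem_Icc.1 hx
      exact ((hdp s x hx1 hx2).pow 2).div_const _
    have h2 : HasDerivAt (fun u => ∑ x ∈ Finset.Icc 1 M, r u x ^ 2 / 2)
        (∑ x ∈ Finset.Icc 1 M,
          (2 * r s x ^ 1 * (p s (x + 1) / m (x + 1) - p s x / m x)) / 2) s := by
      apply HasDerivAt.fun_sum
      intro x hx
      obtain ⟨hx1, hx2⟩ := Finset.mem_Icc.1 hx
      exact ((hdr s x hx1 (by omega)).pow 2).div_const _
    have key : (∑ x ∈ Finset.Icc 1 (M + 1),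
          (2 * p s x ^ 1 * (r s x - r s (x - 1))) / (2 * m x))
        + (∑ x ∈ Finset.Icc 1 M,
          (2 * r s x ^ 1 * (p s (x + 1) / m (x + 1) - p s x / m x)) / 2) = 0 := by
      have e1 : ∑ x ∈ Finset.Icc 1 (M + 1),
          (2 * p s x ^ 1 * (r s x - r s (x - 1))) / (2 * m x)
          = ∑ x ∈ Finset.Icc 1 (M + 1), (p s x / m x) * (r s x - r s (x - 1)) := by
        refine Finset.sum_congr rfl fun x _ => ?_
        have := (hm x).ne'
        field_simp
      have e2 : ∑ x ∈ Finset.Icc 1 M,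
          (2 * r s x ^ 1 * (p s (x + 1) / m (x + 1) - p s x / m x)) / 2
          = ∑ x ∈ Finset.Icc 1 M,
            ((p s (x + 1) / m (x + 1)) - p s x / m x) * r s x := by
        refine Finset.sum_congr rfl fun x _ => ?_
        ring
      rw [e1, e2, abelSum M (fun x => p s x / m x) (r s) (hr0 s) (hrN s)]
      exact neg_add_cancel _
    exact key ▸ (h1.add h2)
  exact is_const_of_deriv_eq_zero (fun s => (hder s).differentiableAt)
    (fun s => (hder s).deriv) t 0

/-- quantitative closure of the momentum equation.  For `g` of class `C²` on
`[0,1]` (with first and second derivatives `g'`, `g''`), uniformly for `t ∈ [0,T]`: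
`| 𝒫_N(g,t) − 𝒫_N(g,0) + ∫₀ᵗ ℛ_N(g',s) ds | ≤ C/N`. -/
theorem stmt19 (β rr pp : ℝ → ℝ)
    (hβc : ContinuousOn β (Set.Icc 0 1)) (hβpos : ∀ y ∈ Set.Icc (0:ℝ) 1, 0 < β y)
    (hrrc : ContDiffOn ℝ 1 rr (Set.Icc 0 1)) (hrr0 : rr 0 = 0) (hrr1 : rr 1 = 0)
    (hppc : ContDiffOn ℝ 1 pp (Set.Icc 0 1))
    (mminus mplus mbar : ℝ) (hm0 : 0 < mminus) (hmm : mminus ≤ mplus) (hmb : 0 < mbar)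
    (T : ℝ) (hT : 0 < T)
    (g g' g'' : ℝ → ℝ)
    (hg' : ∀ y ∈ Set.Icc (0:ℝ) 1, HasDerivWithinAt g (g' y) (Set.Icc 0 1) y)
    (hg'' : ∀ y ∈ Set.Icc (0:ℝ) 1, HasDerivWithinAt g' (g'' y) (Set.Icc 0 1) y)
    (hg''c : ContinuousOn g'' (Set.Icc 0 1)) :
    ∃ C : ℝ, ∀ N : ℕ, 2 ≤ N → ∀ m : ℕ → ℝ,
      (∀ x : ℕ, m x ∈ Set.Icc mminus mplus) →
      ∀ r p : ℝ → ℕ → ℝ, IsChainSolution N m r p →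
      (∀ x : ℕ, 1 ≤ x → x ≤ N - 1 → r 0 x = rr ((x : ℝ) / N)) →
      (∀ x : ℕ, 1 ≤ x → x ≤ N → p 0 x = m x * pp ((x : ℝ) / N) / mbar) →
      ∀ t ∈ Set.Icc (0:ℝ) T,
        |(1 / (N : ℝ)) * (∑ x ∈ Finset.Icc 1 N, g ((x : ℝ) / N) * p ((N : ℝ) * t) x)
          - (1 / (N : ℝ)) * (∑ x ∈ Finset.Icc 1 N, g ((x : ℝ) / N) * p 0 x)
          + ∫ s in (0:ℝ)..t, (1 / (N : ℝ)) *
              ∑ x ∈ Finset.Icc 1 (N - 1), g' ((x : ℝ) / N) * r ((N : ℝ) * s) x|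
          ≤ C / N := by
  have hmplus : (0:ℝ) < mplus := lt_of_lt_of_le hm0 hmm
  obtain ⟨Mr, hMr⟩ := isCompact_Icc.exists_bound_of_continuousOn hrrc.continuousOn
  obtain ⟨Mp, hMp⟩ := isCompact_Icc.exists_bound_of_continuousOn hppc.continuousOn
  obtain ⟨M2, hM2⟩ := isCompact_Icc.exists_bound_of_continuousOn hg''c
  have hMr0 : 0 ≤ Mr := le_trans (norm_nonneg _) (hMr 0 (by norm_num))
  have hMp0 : 0 ≤ Mp := le_trans (norm_nonneg _) (hMp 0 (by norm_num))
  have hM20 : 0 ≤ M2 := le_trans (norm_nonneg _) (hM2 0 (by norm_num))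
  set K : ℝ := mplus * Mp ^ 2 / (2 * mbar ^ 2) + Mr ^ 2 / 2 with hKdef
  have hK0 : 0 ≤ K := by positivity
  refine ⟨M2 * Real.sqrt (2 * K) * T, ?_⟩
  intro N hN m hm r p hchain hr0i hp0i t ht
  obtain ⟨M, rfl⟩ : ∃ M, N = M + 1 := ⟨N - 1, by omega⟩
  have hM1 : 1 ≤ M := by omega
  simp only [Nat.add_sub_cancel]
  set n : ℝ := ((M + 1 : ℕ) : ℝ) with hn
  have hnpos : (0:ℝ) < n := by positivity
  have hnne : n ≠ 0 := hnpos.ne'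
  have hm' : ∀ x, 0 < m x := fun x => lt_of_lt_of_le hm0 (hm x).1
  obtain ⟨hr0f, hrNf, hdr, hdp⟩ := hchain
  -- membership of grid points in [0,1]
  have hmem : ∀ x : ℕ, x ≤ M + 1 → ((x : ℝ) / n) ∈ Set.Icc (0:ℝ) 1 := by
    intro x hx
    constructor
    · positivity
    · rw [div_le_one hnpos, hn]
      exact_mod_cast hx
  -- energy bound
  have hrsq : ∀ t' : ℝ, ∑ x ∈ Finset.Icc 1 M, r t' x ^ 2 ≤ 2 * (n * K) := by
    intro t'
    have hE := energyConst M m hm' r p ⟨hr0f, hrNf, hdr, hdp⟩ t'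
    have hHp0 : ∑ x ∈ Finset.Icc 1 (M + 1), p 0 x ^ 2 / (2 * m x)
        ≤ n * (mplus * Mp ^ 2 / (2 * mbar ^ 2)) := by
      have hb : ∀ x ∈ Finset.Icc 1 (M + 1),
          p 0 x ^ 2 / (2 * m x) ≤ mplus * Mp ^ 2 / (2 * mbar ^ 2) := by
        intro x hx
        obtain ⟨hx1, hx2⟩ := Finset.mem_Icc.1 hx
        rw [hp0i x hx1 hx2]
        have hppb := hMp _ (hmem x hx2)
        rw [Real.norm_eq_abs] at hppb
        have hpp2 : pp ((x:ℝ)/n) ^ 2 ≤ Mp ^ 2 :=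
          sq_le_sq' (neg_le_of_abs_le hppb) (le_of_abs_le hppb)
        have heq : (m x * pp ((x:ℝ)/n) / mbar) ^ 2 / (2 * m x)
            = m x * pp ((x:ℝ)/n) ^ 2 / (2 * mbar ^ 2) := by
          field_simp [(hm' x).ne', hmb.ne']
        rw [heq]
        have hnum : m x * pp ((x:ℝ)/n) ^ 2 ≤ mplus * Mp ^ 2 :=
          mul_le_mul (hm x).2 hpp2 (sq_nonneg _) hmplus.le
        exact (div_le_div_iff_of_pos_right (by positivity)).2 hnum
      calc ∑ x ∈ Finset.Icc 1 (M + 1), p 0 x ^ 2 / (2 * m x)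
          ≤ (Finset.Icc 1 (M + 1)).card • (mplus * Mp ^ 2 / (2 * mbar ^ 2)) :=
            Finset.sum_le_card_nsmul _ _ _ hb
      _ = n * (mplus * Mp ^ 2 / (2 * mbar ^ 2)) := by
            rw [Nat.card_Icc, nsmul_eq_mul]
            norm_num [hn]
    have hHr0 : ∑ x ∈ Finset.Icc 1 M, r 0 x ^ 2 / 2 ≤ n * (Mr ^ 2 / 2) := by
      have hb : ∀ x ∈ Finset.Icc 1 M, r 0 x ^ 2 / 2 ≤ Mr ^ 2 / 2 := by
        intro x hx
        obtain ⟨hx1, hx2⟩ := Finset.mem_Icc.1 hx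
        rw [hr0i x hx1 (by omega)]
        have hrrb := hMr _ (hmem x (by omega))
        rw [Real.norm_eq_abs] at hrrb
        have : rr ((x:ℝ)/n) ^ 2 ≤ Mr ^ 2 :=
          sq_le_sq' (neg_le_of_abs_le hrrb) (le_of_abs_le hrrb)
        linarith
      calc ∑ x ∈ Finset.Icc 1 M, r 0 x ^ 2 / 2
          ≤ (Finset.Icc 1 M).card • (Mr ^ 2 / 2) := Finset.sum_le_card_nsmul _ _ _ hb
      _ = (M : ℝ) * (Mr ^ 2 / 2) := by rw [Nat.card_Icc, nsmul_eq_mul]; norm_num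
      _ ≤ n * (Mr ^ 2 / 2) := by
            have hMn : (M : ℝ) ≤ n := by rw [hn]; push_cast; linarith
            have h0 : (0:ℝ) ≤ Mr ^ 2 / 2 := by positivity
            exact mul_le_mul_of_nonneg_right hMn h0
    have hppos : 0 ≤ ∑ x ∈ Finset.Icc 1 (M + 1), p t' x ^ 2 / (2 * m x) :=
      Finset.sum_nonneg fun x _ =>
        div_nonneg (sq_nonneg _) (by linarith [hm' x])
    have hK' : n * K = n * (mplus * Mp ^ 2 / (2 * mbar ^ 2)) + n * (Mr ^ 2 / 2) := by
      rw [hKdef]; ring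
    have h1 : ∑ x ∈ Finset.Icc 1 M, r t' x ^ 2 / 2 ≤ n * K := by
      linarith [hE, hHp0, hHr0, hppos, hK']
    have h2 : ∑ x ∈ Finset.Icc 1 M, r t' x ^ 2 / 2
        = (∑ x ∈ Finset.Icc 1 M, r t' x ^ 2) / 2 := by
      rw [Finset.sum_div]
    rw [h2] at h1
    calc ∑ x ∈ Finset.Icc 1 M, r t' x ^ 2
        = 2 * ((∑ x ∈ Finset.Icc 1 M, r t' x ^ 2) / 2) := by ring
    _ ≤ 2 * (n * K) := mul_le_mul_of_nonneg_left h1 (by norm_num)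
  -- Cauchy–Schwarz bound on the sum of |r|
  have habs : ∀ t' : ℝ, ∑ x ∈ Finset.Icc 1 M, |r t' x| ≤ Real.sqrt (2 * K) * n := by
    intro t'
    set S : ℝ := ∑ x ∈ Finset.Icc 1 M, |r t' x| with hS
    have hS0 : 0 ≤ S := Finset.sum_nonneg fun x _ => abs_nonneg _
    have hcs := Finset.sum_mul_sq_le_sq_mul_sq (Finset.Icc 1 M)
      (fun _ => (1:ℝ)) (fun x => |r t' x|)
    simp only [one_mul, one_pow, sq_abs, Finset.sum_const, Nat.card_Icc,
      Nat.add_sub_cancel, nsmul_eq_mul, mul_one] at hcs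
    have hMn : (M : ℝ) ≤ n := by rw [hn]; push_cast; linarith
    have hr2nn : (0:ℝ) ≤ ∑ x ∈ Finset.Icc 1 M, r t' x ^ 2 :=
      Finset.sum_nonneg fun x _ => sq_nonneg _
    have hS2 : S ^ 2 ≤ 2 * K * n ^ 2 := by
      calc S ^ 2 ≤ (M : ℝ) * ∑ x ∈ Finset.Icc 1 M, r t' x ^ 2 := hcs
      _ ≤ n * (2 * (n * K)) := by
          apply mul_le_mul hMn (hrsq t') hr2nn (le_of_lt hnpos)
      _ = 2 * K * n ^ 2 := by ring
    calc S = Real.sqrt (S ^ 2) := (Real.sqrt_sq hS0).symm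
    _ ≤ Real.sqrt (2 * K * n ^ 2) := Real.sqrt_le_sqrt hS2
    _ = Real.sqrt (2 * K) * n := by
        rw [Real.sqrt_mul (by positivity), Real.sqrt_sq hnpos.le]
  -- continuity of the components
  have hcontr : ∀ x : ℕ, x ≤ M + 1 → Continuous fun s : ℝ => r (n * s) x := by
    intro x hx
    rcases Nat.eq_zero_or_pos x with h0 | h1
    · subst h0
      have : (fun s : ℝ => r (n * s) 0) = fun _ => 0 := funext fun s => hr0f _
      rw [this]; exact continuous_const
    · rcases eq_or_lt_of_le hx with rfl | hlt
      · have : (fun s : ℝ => r (n * s) (M + 1)) = fun _ => 0 := funext fun s => hrNf _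
        rw [this]; exact continuous_const
      · have hdiff : Differentiable ℝ fun u => r u x :=
          fun u => (hdr u x h1 (by omega)).differentiableAt
        exact hdiff.continuous.comp (continuous_const.mul continuous_id)
  -- the derivative of the momentum functional
  set D : ℝ → ℝ := fun s => ∑ x ∈ Finset.Icc 1 (M + 1),
      g ((x : ℝ) / n) * (r (n * s) x - r (n * s) (x - 1)) with hD
  set E : ℝ → ℝ := fun s => (1 / n) *
      ∑ x ∈ Finset.Icc 1 M, g' ((x : ℝ) / n) * r (n * s) x with hE
  set F : ℝ → ℝ := fun s => (1 / n) *
      ∑ x ∈ Finset.Icc 1 (M + 1), g ((x : ℝ) / n) * p (n * s) x with hF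
  have hFderiv : ∀ s : ℝ, HasDerivAt F (D s) s := by
    intro s
    have h1 : ∀ x ∈ Finset.Icc 1 (M + 1), HasDerivAt
        (fun u : ℝ => g ((x : ℝ) / n) * p (n * u) x)
        (g ((x : ℝ) / n) * ((r (n * s) x - r (n * s) (x - 1)) * n)) s := by
      intro x hx
      obtain ⟨hx1, hx2⟩ := Finset.mem_Icc.1 hx
      have hp1 := hdp (n * s) x hx1 hx2
      have hlin : HasDerivAt (fun u : ℝ => n * u) n s := by
        simpa using (hasDerivAt_id s).const_mul n
      have hcomp : HasDerivAt (fun u : ℝ => p (n * u) x)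
          ((r (n * s) x - r (n * s) (x - 1)) * n) s := hp1.comp s hlin
      exact hcomp.const_mul _
    have hsum := HasDerivAt.fun_sum h1
    have := hsum.const_mul (1 / n)
    have this' : HasDerivAt F _ s := this
    convert this' using 1
    rw [Finset.mul_sum]
    refine Finset.sum_congr rfl fun x _ => ?_
    field_simp
  have hcontD : Continuous D := by
    apply continuous_finset_sum
    intro x hx
    obtain ⟨hx1, hx2⟩ := Finset.mem_Icc.1 hx
    exact continuous_const.mul ((hcontr x hx2).sub (hcontr (x - 1) (by omega)))
  have hcontE : Continuous E := by
    apply Continuous.mul continuous_const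
    apply continuous_finset_sum
    intro x hx
    obtain ⟨hx1, hx2⟩ := Finset.mem_Icc.1 hx
    exact continuous_const.mul (hcontr x (by omega))
  -- FTC
  have hFTC : ∫ s in (0:ℝ)..t, D s = F t - F 0 :=
    intervalIntegral.integral_eq_sub_of_hasDerivAt (fun s _ => hFderiv s)
      (hcontD.intervalIntegrable 0 t)
  have hF0 : (1 / n) * (∑ x ∈ Finset.Icc 1 (M + 1), g ((x : ℝ) / n) * p 0 x) = F 0 := by
    rw [hF]
    norm_num
  -- pointwise bound on D + E
  have hDE : ∀ s : ℝ, |D s + E s| ≤ M2 * Real.sqrt (2 * K) / n := by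
    intro s
    have hDs : D s = - ∑ x ∈ Finset.Icc 1 M,
        (g (((x + 1 : ℕ) : ℝ) / n) - g ((x : ℝ) / n)) * r (n * s) x :=
      abelSum M (fun x => g ((x : ℝ) / n)) (r (n * s)) (hr0f _) (hrNf _)
    have hcomb : D s + E s = ∑ x ∈ Finset.Icc 1 M,
        (g' ((x : ℝ) / n) * (1 / n)
          - (g (((x + 1 : ℕ) : ℝ) / n) - g ((x : ℝ) / n))) * r (n * s) x := by
      have hEs : E s = ∑ x ∈ Finset.Icc 1 M, (1 / n) * (g' ((x : ℝ) / n) * r (n * s) x) := by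
        simp only [hE]
        rw [Finset.mul_sum]
      rw [hDs, hEs, ← Finset.sum_neg_distrib, ← Finset.sum_add_distrib]
      refine Finset.sum_congr rfl fun x _ => ?_
      ring
    rw [hcomb]
    have hcoef : ∀ x ∈ Finset.Icc 1 M,
        |g' ((x : ℝ) / n) * (1 / n)
          - (g (((x + 1 : ℕ) : ℝ) / n) - g ((x : ℝ) / n))| ≤ M2 / n ^ 2 := by
      intro x hx
      obtain ⟨hx1, hx2⟩ := Finset.mem_Icc.1 hx
      have ha : ((x : ℝ) / n) ∈ Set.Icc (0:ℝ) 1 := hmem x (by omega)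
      have hb : (((x + 1 : ℕ) : ℝ) / n) ∈ Set.Icc (0:ℝ) 1 := hmem (x + 1) (by omega)
      have hba : ((x + 1 : ℕ) : ℝ) / n - (x : ℝ) / n = 1 / n := by
        push_cast
        field_simp
        ring
      have hab : (x : ℝ) / n ≤ ((x + 1 : ℕ) : ℝ) / n := by
        gcongr
        push_cast
        linarith
      have hM2' : ∀ y ∈ Set.Icc (0:ℝ) 1, |g'' y| ≤ M2 := fun y hy => by
        rw [← Real.norm_eq_abs]; exact hM2 y hy
      have htay := taylorBd hM20 hg' hg'' hM2' ha hb hab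
      rw [hba] at htay
      have hrw : g' ((x : ℝ) / n) * (1 / n)
          - (g (((x + 1 : ℕ) : ℝ) / n) - g ((x : ℝ) / n))
          = -(g (((x + 1 : ℕ) : ℝ) / n) - g ((x : ℝ) / n)
              - g' ((x : ℝ) / n) * (1 / n)) := by ring
      rw [hrw, abs_neg]
      calc |g (((x + 1 : ℕ) : ℝ) / n) - g ((x : ℝ) / n) - g' ((x : ℝ) / n) * (1 / n)|
          ≤ M2 * (1 / n) * (1 / n) := htay
      _ = M2 / n ^ 2 := by
          rw [pow_two, div_mul_eq_div_div]
          ring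
    calc |∑ x ∈ Finset.Icc 1 M,
        (g' ((x : ℝ) / n) * (1 / n)
          - (g (((x + 1 : ℕ) : ℝ) / n) - g ((x : ℝ) / n))) * r (n * s) x|
        ≤ ∑ x ∈ Finset.Icc 1 M,
          |(g' ((x : ℝ) / n) * (1 / n)
            - (g (((x + 1 : ℕ) : ℝ) / n) - g ((x : ℝ) / n))) * r (n * s) x| :=
          Finset.abs_sum_le_sum_abs _ _
    _ ≤ ∑ x ∈ Finset.Icc 1 M, (M2 / n ^ 2) * |r (n * s) x| := by
        refine Finset.sum_le_sum fun x hx => ?_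
        rw [abs_mul]
        exact mul_le_mul_of_nonneg_right (hcoef x hx) (abs_nonneg _)
    _ = (M2 / n ^ 2) * ∑ x ∈ Finset.Icc 1 M, |r (n * s) x| := by
        rw [Finset.mul_sum]
    _ ≤ (M2 / n ^ 2) * (Real.sqrt (2 * K) * n) :=
        mul_le_mul_of_nonneg_left (habs _) (by positivity)
    _ = M2 * Real.sqrt (2 * K) / n := by
        field_simp [hnne]
  -- final assembly
  have hintD : IntervalIntegrable D MeasureTheory.volume 0 t := hcontD.intervalIntegrable 0 t
  have hintE : IntervalIntegrable E MeasureTheory.volume 0 t := hcontE.intervalIntegrable 0 t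
  rw [hF0]
  have hsplit : F t - F 0 + (∫ s in (0:ℝ)..t, E s) = ∫ s in (0:ℝ)..t, (D s + E s) := by
    rw [← hFTC, ← intervalIntegral.integral_add hintD hintE]
  rw [show (∫ s in (0:ℝ)..t, (1 / n) *
        ∑ x ∈ Finset.Icc 1 M, g' ((x : ℝ) / n) * r (n * s) x) = ∫ s in (0:ℝ)..t, E s from rfl,
      hsplit]
  have hb := intervalIntegral.norm_integral_le_of_norm_le_const
    (C := M2 * Real.sqrt (2 * K) / n) (f := fun s => D s + E s) (a := (0:ℝ)) (b := t)
    (fun s _ => by rw [Real.norm_eq_abs]; exact hDE s)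
  rw [Real.norm_eq_abs] at hb
  calc |∫ s in (0:ℝ)..t, (D s + E s)| ≤ (M2 * Real.sqrt (2 * K) / n) * |t - 0| := hb
  _ ≤ (M2 * Real.sqrt (2 * K) / n) * T := by
      rw [sub_zero, abs_of_nonneg ht.1]
      exact mul_le_mul_of_nonneg_left ht.2 (by positivity)
  _ = M2 * Real.sqrt (2 * K) * T / n := by ring
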